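/- arXiv:math/0503545 — 2 statements merged into one kernel-verified Lean document; each statement's English description precedes it below -/
import Mathlib

section
/- Let f ≥ 1 be an integer. Then the symmetric group S_{2f} is the disjoint union of the right cosets Ψ·d, d ∈ D_f: S_{2f} = ⊔_{d∈D_f} Ψd. -/
open scoped BigOperators Classical
open MulOpposite

noncomputable section

namespace SpBrauer

/-- the conjugate index `i' = 2m-1-i` (0-based version of `2m+1-i`). -/
def conjIdx (m : ℕ) (i : Fin (2*m)) : Fin (2*m) :=
  ⟨2*m - 1 - (i : ℕ), by have := i.isLt; omega⟩

/-- the sign `ε_{ij}`. -/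
def epsZ (m : ℕ) (i j : Fin (2*m)) : ℤ :=
  if (i : ℕ) + (j : ℕ) + 1 = 2*m then (if (i : ℕ) < (j : ℕ) then 1 else -1) else 0

/-- tensor space `V^{⊗ n}` modelled as the free module on multi-indices. -/
abbrev Ten (R : Type) (m n : ℕ) : Type := (Fin n → Fin (2*m)) → R

/-- basis tensor `v_{i_1} ⊗ ⋯ ⊗ v_{i_n}`. -/
def dta (R : Type) [CommRing R] (m n : ℕ) (i : Fin n → Fin (2*m)) : Ten R m n :=
  fun a => if a = i then 1 else 0

/-- the linear map on free modules with "matrix" `M`. -/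
def funMap (R : Type) [CommRing R] (α β : Type) [Fintype α]
    (M : β → α → R) : (α → R) →ₗ[R] (β → R) where
  toFun f := fun b => ∑ a, M b a * f a
  map_add' f g := by
    funext b
    simp [Pi.add_apply, mul_add, Finset.sum_add_distrib]
  map_smul' c f := by
    funext b
    simp only [Pi.smul_apply, smul_eq_mul, RingHom.id_apply]
    rw [Finset.mul_sum]
    exact Finset.sum_congr rfl (fun a _ => by ring)

/-- the operator given by the right action of the Brauer algebra generator `s_j`
(`j` is 0-based: `s_j` swaps positions `j` and `j+1` with a sign). -/
def sOp (R : Type) [CommRing R] (m n : ℕ) (j : Fin (n-1)) :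
    Ten R m n →ₗ[R] Ten R m n :=
  funMap R _ _ (fun a b =>
    if b = a ∘ (Equiv.swap (⟨(j:ℕ), by have := j.isLt; omega⟩ : Fin n)
        (⟨(j:ℕ)+1, by have := j.isLt; omega⟩ : Fin n)) then -1 else 0)

/-- the operator given by the right action of the Brauer algebra generator `e_j`. -/
def eOp (R : Type) [CommRing R] (m n : ℕ) (j : Fin (n-1)) :
    Ten R m n →ₗ[R] Ten R m n :=
  funMap R _ _ (fun a b =>
    (if ∀ p : Fin n, p ≠ (⟨(j:ℕ), by have := j.isLt; omega⟩ : Fin n) →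
        p ≠ (⟨(j:ℕ)+1, by have := j.isLt; omega⟩ : Fin n) → b p = a p then 1 else 0) *
    (-((epsZ m (a ⟨(j:ℕ), by have := j.isLt; omega⟩) (a ⟨(j:ℕ)+1, by have := j.isLt; omega⟩) : ℤ) : R)) *
    ((epsZ m (b ⟨(j:ℕ), by have := j.isLt; omega⟩) (b ⟨(j:ℕ)+1, by have := j.isLt; omega⟩) : ℤ) : R))

/-- the (sign-twisted) right place-permutation action of a permutation on tensor space. -/
def permOp (R : Type) [CommRing R] (m n : ℕ) (π : Equiv.Perm (Fin n)) :
    Ten R m n →ₗ[R] Ten R m n :=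
  funMap R _ _ (fun a b => if b = a ∘ π then ((Equiv.Perm.sign π : ℤ) : R) else 0)

/-- the `n`-fold tensor power of (the endomorphism of `V` given by) a matrix `g`,
acting diagonally on tensor space. -/
def tenOp (R : Type) [CommRing R] (m n : ℕ) (g : Matrix (Fin (2*m)) (Fin (2*m)) R) :
    Ten R m n →ₗ[R] Ten R m n :=
  funMap R _ _ (fun a b => ∏ k : Fin n, g (a k) (b k))

/-- the skew-symmetric bilinear form `(v,w)` determined by `(v_i, v_j) = ε_{ij}`. -/
def sform (R : Type) [CommRing R] (m : ℕ) (v w : Fin (2*m) → R) : R :=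
  ∑ i, ∑ j, v i * ((epsZ m i j : ℤ) : R) * w j

/-- membership in the symplectic group `Sp(V)` (an invertible linear map preserving the form). -/
def IsSymp (R : Type) [CommRing R] (m : ℕ) (g : Matrix (Fin (2*m)) (Fin (2*m)) R) : Prop :=
  IsUnit g.det ∧ ∀ v w, sform R m (g.mulVec v) (g.mulVec w) = sform R m v w

/-- membership in the symplectic similitude group `GSp(V)`. -/
def IsGSymp (R : Type) [CommRing R] (m : ℕ) (g : Matrix (Fin (2*m)) (Fin (2*m)) R) : Prop :=
  IsUnit g.det ∧ ∃ d : R, d ≠ 0 ∧ ∀ v w, sform R m (g.mulVec v) (g.mulVec w) = d * sform R m v w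

/-! ### The Brauer algebra, by generators and relations -/

/-- generators of the Brauer algebra `B_n(x)`:  `s i` and `e i` for `i = 0, …, n-2`
(0-based versions of `s_1, …, s_{n-1}`, `e_1, …, e_{n-1}`). -/
inductive BGen (n : ℕ) : Type
  | s : Fin (n-1) → BGen n
  | e : Fin (n-1) → BGen n

/-- the defining relations of the Brauer algebra `B_n(x)`. -/
inductive BRel (R : Type) [CommRing R] (x : R) (n : ℕ) :
    FreeAlgebra R (BGen n) → FreeAlgebra R (BGen n) → Prop
  | ss (i : Fin (n-1)) :
      BRel R x n (FreeAlgebra.ι R (BGen.s i) * FreeAlgebra.ι R (BGen.s i)) 1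
  | ee (i : Fin (n-1)) :
      BRel R x n (FreeAlgebra.ι R (BGen.e i) * FreeAlgebra.ι R (BGen.e i))
        (x • FreeAlgebra.ι R (BGen.e i))
  | es (i : Fin (n-1)) :
      BRel R x n (FreeAlgebra.ι R (BGen.e i) * FreeAlgebra.ι R (BGen.s i))
        (FreeAlgebra.ι R (BGen.e i))
  | se (i : Fin (n-1)) :
      BRel R x n (FreeAlgebra.ι R (BGen.s i) * FreeAlgebra.ι R (BGen.e i))
        (FreeAlgebra.ι R (BGen.e i))
  | ssComm (i j : Fin (n-1)) (h : (i:ℕ)+1 < (j:ℕ)) :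
      BRel R x n (FreeAlgebra.ι R (BGen.s i) * FreeAlgebra.ι R (BGen.s j))
        (FreeAlgebra.ι R (BGen.s j) * FreeAlgebra.ι R (BGen.s i))
  | seComm (i j : Fin (n-1)) (h : (i:ℕ)+1 < (j:ℕ)) :
      BRel R x n (FreeAlgebra.ι R (BGen.s i) * FreeAlgebra.ι R (BGen.e j))
        (FreeAlgebra.ι R (BGen.e j) * FreeAlgebra.ι R (BGen.s i))
  | eeComm (i j : Fin (n-1)) (h : (i:ℕ)+1 < (j:ℕ)) :
      BRel R x n (FreeAlgebra.ι R (BGen.e i) * FreeAlgebra.ι R (BGen.e j))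
        (FreeAlgebra.ι R (BGen.e j) * FreeAlgebra.ι R (BGen.e i))
  | braid (i j : Fin (n-1)) (h : (j:ℕ) = (i:ℕ)+1) :
      BRel R x n
        (FreeAlgebra.ι R (BGen.s i) * FreeAlgebra.ι R (BGen.s j) * FreeAlgebra.ι R (BGen.s i))
        (FreeAlgebra.ι R (BGen.s j) * FreeAlgebra.ι R (BGen.s i) * FreeAlgebra.ι R (BGen.s j))
  | eje (i j : Fin (n-1)) (h : (j:ℕ) = (i:ℕ)+1) :
      BRel R x n
        (FreeAlgebra.ι R (BGen.e i) * FreeAlgebra.ι R (BGen.e j) * FreeAlgebra.ι R (BGen.e i))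
        (FreeAlgebra.ι R (BGen.e i))
  | eje' (i j : Fin (n-1)) (h : (j:ℕ) = (i:ℕ)+1) :
      BRel R x n
        (FreeAlgebra.ι R (BGen.e j) * FreeAlgebra.ι R (BGen.e i) * FreeAlgebra.ι R (BGen.e j))
        (FreeAlgebra.ι R (BGen.e j))
  | see (i j : Fin (n-1)) (h : (j:ℕ) = (i:ℕ)+1) :
      BRel R x n
        (FreeAlgebra.ι R (BGen.s i) * FreeAlgebra.ι R (BGen.e j) * FreeAlgebra.ι R (BGen.e i))
        (FreeAlgebra.ι R (BGen.s j) * FreeAlgebra.ι R (BGen.e i))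
  | ees (i j : Fin (n-1)) (h : (j:ℕ) = (i:ℕ)+1) :
      BRel R x n
        (FreeAlgebra.ι R (BGen.e j) * FreeAlgebra.ι R (BGen.e i) * FreeAlgebra.ι R (BGen.s j))
        (FreeAlgebra.ι R (BGen.e j) * FreeAlgebra.ι R (BGen.s i))

/-- the Brauer algebra `B_n(x)` over `R`, presented by generators and relations. -/
abbrev BrauerAlg (R : Type) [CommRing R] (x : R) (n : ℕ) : Type := RingQuot (BRel R x n)

/-- the generator `s_i` of the Brauer algebra (0-based index). -/
def bS (R : Type) [CommRing R] (x : R) (n : ℕ) (i : Fin (n-1)) : BrauerAlg R x n :=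
  RingQuot.mkAlgHom R (BRel R x n) (FreeAlgebra.ι R (BGen.s i))

/-- the generator `e_i` of the Brauer algebra (0-based index). -/
def bE (R : Type) [CommRing R] (x : R) (n : ℕ) (i : Fin (n-1)) : BrauerAlg R x n :=
  RingQuot.mkAlgHom R (BRel R x n) (FreeAlgebra.ι R (BGen.e i))

/-- the element `E_f = e_1 e_3 ⋯ e_{2f-1}` of the Brauer algebra. -/
def EfB (R : Type) [CommRing R] (x : R) (n f : ℕ) (hf : 2*f ≤ n) : BrauerAlg R x n :=
  (List.ofFn (fun i : Fin f => bE R x n ⟨2*(i:ℕ), by have := i.isLt; omega⟩)).prod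

/-- the two-sided ideal `B^{(f)}` of the Brauer algebra generated by `E_f`
(it is `0` when `2f > n`, matching the convention of the paper). -/
def Bideal (R : Type) [CommRing R] (x : R) (n f : ℕ) : Submodule R (BrauerAlg R x n) :=
  Submodule.span R {y | ∃ (hf : 2*f ≤ n) (a b : BrauerAlg R x n), y = a * EfB R x n f hf * b}

/-- the operator on tensor space given by the right action of `E_f = e_1e_3⋯e_{2f-1}`. -/
def EfOp (R : Type) [CommRing R] (m n f : ℕ) (hf : 2*f ≤ n) :
    Module.End R (Ten R m n) :=
  (List.ofFn (fun i : Fin f => eOp R m n ⟨2*(i:ℕ), by have := i.isLt; omega⟩)).prod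

/-! ### Combinatorial predicates -/

/-- `σ ∈ S_{{2f+1, …, n}}`, i.e. `σ` fixes `1, …, 2f` pointwise (0-based). -/
def FixLow (n f : ℕ) (σ : Equiv.Perm (Fin n)) : Prop :=
  ∀ a : Fin n, (a:ℕ) < 2*f → σ a = a

/-- `σ ∈ S_{2f} = S_{{1, …, 2f}}`, i.e. `σ` fixes `2f+1, …, n` pointwise (0-based). -/
def FixHigh (n f : ℕ) (σ : Equiv.Perm (Fin n)) : Prop :=
  ∀ a : Fin n, 2*f ≤ (a:ℕ) → σ a = a

/-- membership in `D_{ν_f}`:  the bitableau `t^{ν_f}·d` is row standard and the first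
column of its first component is increasing (everything 0-based; `d a` is the entry
at the cell of `t^{ν_f}` containing `a`). -/
def DnuP (n f : ℕ) (d : Equiv.Perm (Fin n)) : Prop :=
  (∀ a b : Fin n, (a:ℕ) % 2 = 0 → (b:ℕ) = (a:ℕ)+1 → (b:ℕ) < 2*f → d a < d b) ∧
  (∀ a b : Fin n, (a:ℕ) % 2 = 0 → (b:ℕ) % 2 = 0 → (a:ℕ) < (b:ℕ) → (b:ℕ) < 2*f → d a < d b) ∧
  (∀ a b : Fin n, 2*f ≤ (a:ℕ) → (b:ℕ) = (a:ℕ)+1 → d a < d b)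

/-- membership in `D_f = D_{ν_f} ∩ S_{2f}`. -/
def DfP (n f : ℕ) (d : Equiv.Perm (Fin n)) : Prop :=
  DnuP n f d ∧ FixHigh n f d

/-- membership in the row stabilizer `S_{(2^f)}` of the initial `(2^f)`-tableau
(whose rows are `{1,2}, {3,4}, …, {2f-1,2f}`), inside `S_{2f} ≤ S_n`. -/
def RowStabP (n f : ℕ) (w : Equiv.Perm (Fin n)) : Prop :=
  FixHigh n f w ∧ ∀ a : Fin n, ((w a : ℕ))/2 = (a:ℕ)/2

/-- membership in `Ψ`, the normalizer of `S_{(2^f)}` in `S_{2f}`. -/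
def PsiP (n f : ℕ) (z : Equiv.Perm (Fin n)) : Prop :=
  FixHigh n f z ∧ ∀ w, RowStabP n f w ↔ RowStabP n f (z * w * z⁻¹)

/-- `d_J` for a `2f`-element subset `J ⊆ {1, …, n}`:  the unique permutation
enumerating `J` increasingly on the first `2f` positions and the complement of `J`
increasingly on the remaining positions. -/
def IsdJ (n f : ℕ) (J : Finset (Fin n)) (d : Equiv.Perm (Fin n)) : Prop :=
  (∀ a : Fin n, ((a:ℕ) < 2*f → d a ∈ J) ∧ (2*f ≤ (a:ℕ) → d a ∉ J)) ∧
  (∀ a b : Fin n, (a:ℕ) < (b:ℕ) → (b:ℕ) < 2*f → d a < d b) ∧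
  (∀ a b : Fin n, 2*f ≤ (a:ℕ) → (a:ℕ) < (b:ℕ) → d a < d b)

/-- membership in `S_{(2f, n-2f)} = S_{{1,…,2f}} × S_{{2f+1,…,n}}`. -/
def BlockP (n f : ℕ) (d : Equiv.Perm (Fin n)) : Prop :=
  ∀ a : Fin n, (a:ℕ) < 2*f ↔ ((d a : ℕ)) < 2*f

/-- the multi-index `c = (1, 1', 2, 2', …, f, f')`, completed by an
arbitrary multi-index `kk` on the positions `> 2f`. -/
def cIdx (m n f : ℕ) (hfm : f ≤ m) (kk : Fin n → Fin (2*m)) : Fin n → Fin (2*m) :=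
  fun p => if h : (p:ℕ) < 2*f then
    (if (p:ℕ) % 2 = 0 then (⟨(p:ℕ)/2, by omega⟩ : Fin (2*m))
     else conjIdx m ⟨(p:ℕ)/2, by omega⟩)
  else kk p

/-- the multi-index `ĉ = (f+1, (f+1)', …, 2f, (2f)') ∈ I(2m, 2f)`. -/
def cHatIdx (m f : ℕ) (hfm : 2*f ≤ m) : Fin (2*f) → Fin (2*m) :=
  fun p => if (p:ℕ) % 2 = 0 then (⟨f + (p:ℕ)/2, by have := p.isLt; omega⟩ : Fin (2*m))
           else conjIdx m ⟨f + (p:ℕ)/2, by have := p.isLt; omega⟩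

/-- membership in `I_f` (only the values at positions `> 2f` matter):
`2f+1 ≤ kk p ≤ m` (1-based) for all positions `p > 2f`. -/
def IfP (m n f : ℕ) (kk : Fin n → Fin (2*m)) : Prop :=
  ∀ p : Fin n, 2*f ≤ (p:ℕ) → 2*f ≤ ((kk p : ℕ)) ∧ ((kk p : ℕ)) < m

/-- the weight of a multi-index. -/
def wtOf (m k : ℕ) (a : Fin k → Fin (2*m)) : Fin (2*m) → ℕ :=
  fun j => (Finset.univ.filter (fun p => a p = j)).card

/-- the weight-`μ` component of an element of tensor space. -/
def wcomp (R : Type) [CommRing R] (m k : ℕ) (μ : Fin (2*m) → ℕ) (w : Ten R m k) :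
    Ten R m k :=
  fun a => if wtOf m k a = μ then w a else 0

/-- partial sums of a partition. -/
def psum (l : ℕ → ℕ) (r : ℕ) : ℕ := ∑ i ∈ Finset.range r, l i

/-- `l` represents a partition of `n - 2f` (parts listed weakly decreasingly). -/
def PartP (n f : ℕ) (l : ℕ → ℕ) : Prop :=
  (∀ i, l (i+1) ≤ l i) ∧ psum l n = n - 2*f ∧ ∀ i, n ≤ i → l i = 0

/-- membership in the Young subgroup `S_λ ≤ S_{{2f+1, …, n}}` stabilizing the rows of
the initial `λ`-tableau `t^λ` (with entries `2f+1, …, n`). -/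
def InSlam (n f : ℕ) (l : ℕ → ℕ) (w : Equiv.Perm (Fin n)) : Prop :=
  (∀ a : Fin n, (a:ℕ) < 2*f → w a = a) ∧
  (∀ (a : Fin n) (r : ℕ), 2*f + psum l r ≤ (a:ℕ) → (a:ℕ) < 2*f + psum l (r+1) →
     2*f + psum l r ≤ ((w a : ℕ)) ∧ ((w a : ℕ)) < 2*f + psum l (r+1))

/-- `d = d(t)` for a standard `λ`-tableau `t` with entries `2f+1, …, n`, i.e.
`d ∈ S_{{2f+1,…,n}}` and `t^λ · d` is standard. -/
def StdP (n f : ℕ) (l : ℕ → ℕ) (d : Equiv.Perm (Fin n)) : Prop :=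
  FixLow n f d ∧
  (∀ (a b : Fin n) (r c : ℕ), (a:ℕ) = 2*f + psum l r + c → c+1 < l r →
     (b:ℕ) = (a:ℕ)+1 → d a < d b) ∧
  (∀ (a b : Fin n) (r c : ℕ), (a:ℕ) = 2*f + psum l r + c → c < l (r+1) →
     (b:ℕ) = 2*f + psum l (r+1) + c → d a < d b)

/-- the embedding of the index set of the basis of `V` into that of `Ṽ`
(`v_i ↦ ṽ_i`, `v_{i'} ↦ ṽ_{i'}`). -/
def embIdx (m m0 : ℕ) (h : m ≤ m0) : Fin (2*m) → Fin (2*m0) :=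
  fun j => if (j:ℕ) < m then ⟨(j:ℕ), by have := j.isLt; omega⟩
           else ⟨(j:ℕ) + 2*(m0 - m), by have := j.isLt; omega⟩

/-- the inclusion `V^{⊗n} ↪ Ṽ^{⊗n}`. -/
def inclT (R : Type) [CommRing R] (m m0 n : ℕ) (h : m ≤ m0) :
    Ten R m n →ₗ[R] Ten R m0 n :=
  funMap R _ _ (fun (b : Fin n → Fin (2*m0)) (a : Fin n → Fin (2*m)) =>
    if b = embIdx m m0 h ∘ a then 1 else 0)

/-- the projection `π_K : Ṽ^{⊗n} ↠ V^{⊗n}` killing all basis tensors containing a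
factor `ṽ_i` or `ṽ_{i'}` with `m+1 ≤ i ≤ m_0`. -/
def projT (R : Type) [CommRing R] (m m0 n : ℕ) (h : m ≤ m0) :
    Ten R m0 n →ₗ[R] Ten R m n :=
  funMap R _ _ (fun (a : Fin n → Fin (2*m)) (b : Fin n → Fin (2*m0)) =>
    if b = embIdx m m0 h ∘ a then 1 else 0)



/-! ### Auxiliary development for Statement 13 -/

section Stmt13

variable {f : ℕ}

/-- flip within a pair: `2k ↔ 2k+1`. -/
def flipFn (f : ℕ) (a : Fin (2*f)) : Fin (2*f) :=
  if h : (a:ℕ) % 2 = 0 then ⟨(a:ℕ)+1, by have := a.isLt; omega⟩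
  else ⟨(a:ℕ)-1, by have := a.isLt; omega⟩

lemma flip_val (a : Fin (2*f)) :
    ((flipFn f a : ℕ)) = if (a:ℕ) % 2 = 0 then (a:ℕ)+1 else (a:ℕ)-1 := by
  unfold flipFn; split_ifs <;> rfl

lemma flip_div (a : Fin (2*f)) : ((flipFn f a : ℕ))/2 = (a:ℕ)/2 := by
  rw [flip_val]; split_ifs <;> omega

lemma flip_ne (a : Fin (2*f)) : flipFn f a ≠ a := by
  intro h
  have := congrArg (fun x : Fin (2*f) => (x:ℕ)) h
  simp only [flip_val] at this
  split_ifs at this <;> omega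

lemma flip_flip (a : Fin (2*f)) : flipFn f (flipFn f a) = a := by
  apply Fin.ext
  rw [flip_val, flip_val]
  have := a.isLt
  split_ifs <;> omega

/-- pair-preserving permutations. -/
def PP (f : ℕ) (z : Equiv.Perm (Fin (2*f))) : Prop :=
  ∀ a b : Fin (2*f), (a:ℕ)/2 = (b:ℕ)/2 → ((z a : ℕ))/2 = ((z b : ℕ))/2

lemma pp_mul {z₁ z₂ : Equiv.Perm (Fin (2*f))} (h₁ : PP f z₁) (h₂ : PP f z₂) :
    PP f (z₁ * z₂) := by
  intro a b hab
  simp only [Equiv.Perm.mul_apply]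
  exact h₁ _ _ (h₂ _ _ hab)

lemma pp_inv {z : Equiv.Perm (Fin (2*f))} (hz : PP f z) : PP f z⁻¹ := by
  intro a b hab
  by_contra hne
  set a' := z⁻¹ a with ha'
  set b' := z⁻¹ b with hb'
  have hza : z a' = a := Equiv.apply_symm_apply z a
  have hzb : z b' = b := Equiv.apply_symm_apply z b
  have h1 : ((z (flipFn f a') : ℕ))/2 = ((z a' : ℕ))/2 := hz _ _ (flip_div a')
  have hne2 : a' ≠ b' := by
    intro h; apply hne; rw [ha', hb'] at h ⊢; rw [h]
  have hne3 : b' ≠ flipFn f a' := by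
    intro h
    apply hne
    have := flip_div a'
    rw [← h] at this
    exact this.symm
  have d1 : z a' ≠ z (flipFn f a') := fun h => flip_ne a' (z.injective h.symm)
  have d2 : z b' ≠ z a' := fun h => hne2 (z.injective h).symm
  have d3 : z b' ≠ z (flipFn f a') := fun h => hne3 (z.injective h)
  have e1 : ((z b' : ℕ))/2 = ((z a' : ℕ))/2 := by rw [hza, hzb]; exact hab.symm
  have v1 : ((z a' : ℕ)) ≠ ((z (flipFn f a') : ℕ)) := fun h => d1 (Fin.ext h)
  have v2 : ((z b' : ℕ)) ≠ ((z a' : ℕ)) := fun h => d2 (Fin.ext h)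
  have v3 : ((z b' : ℕ)) ≠ ((z (flipFn f a') : ℕ)) := fun h => d3 (Fin.ext h)
  omega

lemma fixHigh_always (σ : Equiv.Perm (Fin (2*f))) : FixHigh (2*f) f σ := by
  intro a ha
  exact absurd a.isLt (by omega)

lemma rowStab_iff (ww : Equiv.Perm (Fin (2*f))) :
    RowStabP (2*f) f ww ↔ ∀ a : Fin (2*f), ((ww a : ℕ))/2 = (a:ℕ)/2 :=
  ⟨fun h => h.2, fun h => ⟨fixHigh_always _, h⟩⟩

lemma psiP_iff (z : Equiv.Perm (Fin (2*f))) : PsiP (2*f) f z ↔ PP f z := by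
  constructor
  · intro hz a b hab
    by_cases heq : a = b
    · rw [heq]
    have hsw : RowStabP (2*f) f (Equiv.swap a b) := by
      refine ⟨fixHigh_always _, fun c => ?_⟩
      rcases eq_or_ne c a with rfl | hca
      · rw [Equiv.swap_apply_left]; exact hab.symm
      rcases eq_or_ne c b with rfl | hcb
      · rw [Equiv.swap_apply_right]; exact hab
      · rw [Equiv.swap_apply_of_ne_of_ne hca hcb]
    have h2 : RowStabP (2*f) f (z * Equiv.swap a b * z⁻¹) := (hz.2 _).mp hsw
    have h3 := h2.2 (z a)
    have h4 : (z * Equiv.swap a b * z⁻¹) (z a) = z b := by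
      simp [Equiv.Perm.mul_apply]
    rw [h4] at h3
    exact h3.symm
  · intro hz
    refine ⟨fixHigh_always _, fun ww => ?_⟩
    constructor
    · intro hw
      refine ⟨fixHigh_always _, fun a => ?_⟩
      have h1 : ((ww (z⁻¹ a) : ℕ))/2 = ((z⁻¹ a : ℕ))/2 := hw.2 _
      have h2 : ((z (ww (z⁻¹ a)) : ℕ))/2 = ((z (z⁻¹ a) : ℕ))/2 := hz _ _ h1
      simp only [Equiv.Perm.mul_apply]
      rw [show z (z⁻¹ a) = a from Equiv.apply_symm_apply z a] at h2
      exact h2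
    · intro hw
      refine ⟨fixHigh_always _, fun a => ?_⟩
      have h1 : (((z * ww * z⁻¹) (z a) : ℕ))/2 = ((z a : ℕ))/2 := hw.2 _
      have h4 : (z * ww * z⁻¹) (z a) = z (ww a) := by
        simp [Equiv.Perm.mul_apply]
      rw [h4] at h1
      have h2 : ((z⁻¹ (z (ww a)) : ℕ))/2 = ((z⁻¹ (z a) : ℕ))/2 := pp_inv hz _ _ h1
      simpa using h2

/-- even position of pair `k`. -/
def pe (k : Fin f) : Fin (2*f) := ⟨2*(k:ℕ), by have := k.isLt; omega⟩
/-- odd position of pair `k`. -/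
def po (k : Fin f) : Fin (2*f) := ⟨2*(k:ℕ)+1, by have := k.isLt; omega⟩

lemma dfp_row {d : Equiv.Perm (Fin (2*f))} (hd : DfP (2*f) f d) (k : Fin f) :
    d (pe k) < d (po k) := by
  refine hd.1.1 (pe k) (po k) ?_ ?_ ?_
  · show (2*(k:ℕ)) % 2 = 0; omega
  · show (2*(k:ℕ)+1 : ℕ) = 2*(k:ℕ)+1; rfl
  · show (2*(k:ℕ)+1 : ℕ) < 2*f; have := k.isLt; omega

lemma dfp_col {d : Equiv.Perm (Fin (2*f))} (hd : DfP (2*f) f d) :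
    StrictMono (fun k : Fin f => d (pe k)) := by
  intro k l hkl
  refine hd.1.2.1 (pe k) (pe l) ?_ ?_ ?_ ?_
  · show (2*(k:ℕ)) % 2 = 0; omega
  · show (2*(l:ℕ)) % 2 = 0; omega
  · show (2*(k:ℕ)) < 2*(l:ℕ); have : (k:ℕ) < (l:ℕ) := hkl; omega
  · show (2*(l:ℕ)) < 2*f; have := l.isLt; omega

/-- key uniqueness lemma. -/
lemma df_unique {d d' : Equiv.Perm (Fin (2*f))} (hd : DfP (2*f) f d)
    (hd' : DfP (2*f) f d') (hz : PP f (d'⁻¹ * d)) : d = d' := by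
  set z := d'⁻¹ * d with hzdef
  have hdz : ∀ a, d a = d' (z a) := by
    intro a
    simp [hzdef, Equiv.Perm.mul_apply]
  have hpair : ∀ k : Fin f, ∃ j : Fin f, z (pe k) = pe j ∧ z (po k) = po j := by
    intro k
    have hjlt : ((z (pe k) : ℕ))/2 < f := by
      have := (z (pe k)).isLt; omega
    refine ⟨⟨((z (pe k) : ℕ))/2, hjlt⟩, ?_⟩
    have hsame : ((z (po k) : ℕ))/2 = ((z (pe k) : ℕ))/2 := by
      refine (hz (po k) (pe k) ?_)
      show (2*(k:ℕ)+1)/2 = (2*(k:ℕ))/2; omega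
    have hne : (z (pe k)) ≠ (z (po k)) := by
      intro h
      have := z.injective h
      simp only [pe, po, Fin.mk.injEq] at this
      omega
    have hnev : ((z (pe k) : ℕ)) ≠ ((z (po k) : ℕ)) := fun h => hne (Fin.ext h)
    set j0 := ((z (pe k) : ℕ))/2
    have hcase : (((z (pe k) : ℕ)) = 2*j0 ∧ ((z (po k) : ℕ)) = 2*j0+1) ∨
        (((z (po k) : ℕ)) = 2*j0 ∧ ((z (pe k) : ℕ)) = 2*j0+1) := by omega
    rcases hcase with ⟨h1, h2⟩ | ⟨h1, h2⟩
    · exact ⟨Fin.ext h1, Fin.ext h2⟩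
    · exfalso
      have e1 : z (pe k) = po ⟨j0, hjlt⟩ := Fin.ext h2
      have e2 : z (po k) = pe ⟨j0, hjlt⟩ := Fin.ext h1
      have r1 : d (pe k) < d (po k) := dfp_row hd k
      have r2 : d' (pe ⟨j0, hjlt⟩) < d' (po ⟨j0, hjlt⟩) := dfp_row hd' _
      rw [hdz (pe k), hdz (po k), e1, e2] at r1
      exact absurd r2 (not_lt.mpr (le_of_lt r1))
  classical
  set J : Fin f → Fin f := fun k => Classical.choose (hpair k) with hJdef
  have hJ1 : ∀ k, z (pe k) = pe (J k) := fun k => (Classical.choose_spec (hpair k)).1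
  have hJ2 : ∀ k, z (po k) = po (J k) := fun k => (Classical.choose_spec (hpair k)).2
  set g : Fin f → Fin (2*f) := fun k => d (pe k) with hgdef
  set g' : Fin f → Fin (2*f) := fun k => d' (pe k) with hg'def
  have hcomp : g = g' ∘ J := by
    funext k
    simp only [hgdef, hg'def, Function.comp_apply]
    rw [hdz (pe k), hJ1 k]
  have hgm : StrictMono g := dfp_col hd
  have hg'm : StrictMono g' := dfp_col hd'
  have hJinj : Function.Injective J := by
    intro k l h
    apply hgm.injective
    rw [hcomp]; simp [Function.comp_apply, h]
  have hJsurj : Function.Surjective J := Finite.injective_iff_surjective.mp hJinj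
  have hrange : Set.range g = Set.range g' := by
    rw [hcomp]; exact hJsurj.range_comp g'
  haveI : WellFoundedLT (Fin f) := inferInstance
  have hgg' : g = g' := (hgm.range_inj hg'm).mp hrange
  have hJid : ∀ k, J k = k := by
    intro k
    apply hg'm.injective
    have : g' (J k) = g k := by rw [hcomp]; rfl
    rw [this, hgg']
  have hz1 : ∀ a, z a = a := by
    intro a
    have hlt : (a:ℕ)/2 < f := by have := a.isLt; omega
    set k : Fin f := ⟨(a:ℕ)/2, hlt⟩
    by_cases hpar : (a:ℕ) % 2 = 0
    · have : a = pe k := by apply Fin.ext; show (a:ℕ) = 2*((a:ℕ)/2); omega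
      rw [this, hJ1, hJid]
    · have : a = po k := by apply Fin.ext; show (a:ℕ) = 2*((a:ℕ)/2)+1; omega
      rw [this, hJ2, hJid]
  ext a
  rw [hdz a, hz1 a]

section Exist

variable (w : Equiv.Perm (Fin (2*f)))

/-- the within-pair sorting involution. -/
def tauFn : Fin (2*f) → Fin (2*f) :=
  fun a => if ((w a < w (flipFn f a)) ↔ ((a:ℕ) % 2 = 0)) then a else flipFn f a

lemma tau_invol : Function.Involutive (tauFn w) := by
  intro a
  unfold tauFn
  by_cases h : (w a < w (flipFn f a)) ↔ ((a:ℕ) % 2 = 0)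
  · rw [if_pos h, if_pos h]
  · rw [if_neg h]
    have hwne : w a ≠ w (flipFn f a) := fun he => flip_ne a (w.injective he.symm)
    have hp : (((flipFn f a):ℕ) % 2 = 0) ↔ ¬ ((a:ℕ) % 2 = 0) := by
      rw [flip_val]; have := a.isLt; split_ifs with h0 <;> omega
    have hcond : ¬ ((w (flipFn f a) < w (flipFn f (flipFn f a))) ↔ (((flipFn f a):ℕ) % 2 = 0)) := by
      rw [flip_flip]
      rcases lt_or_gt_of_ne hwne with hlt | hgt
      · have ha0 : ¬ ((a:ℕ) % 2 = 0) := fun h0 => h (iff_of_true hlt h0)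
        have hf0 : (((flipFn f a):ℕ) % 2 = 0) := hp.mpr ha0
        intro hiff
        exact (lt_asymm hlt) (hiff.mpr hf0)
      · have ha0 : (a:ℕ) % 2 = 0 := by
          by_contra h0
          exact h (iff_of_false (fun hw' => (lt_asymm hgt) hw') h0)
        have hf0 : ¬ (((flipFn f a):ℕ) % 2 = 0) := fun hx => (hp.mp hx) ha0
        intro hiff
        exact hf0 (hiff.mp hgt)
    rw [if_neg hcond, flip_flip]

/-- `τ` as a permutation. -/
def tauP : Equiv.Perm (Fin (2*f)) := Function.Involutive.toPerm _ (tau_invol w)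

lemma tauP_apply (a : Fin (2*f)) : tauP w a = tauFn w a := rfl

lemma pp_tau : PP f (tauP w) := by
  intro a b hab
  have key : ∀ c : Fin (2*f), ((tauP w c : ℕ))/2 = (c:ℕ)/2 := by
    intro c
    rw [tauP_apply]
    unfold tauFn
    split_ifs
    · rfl
    · exact flip_div c
  rw [key a, key b, hab]

lemma flip_pe (k : Fin f) : flipFn f (pe k) = po k := by
  apply Fin.ext
  rw [flip_val]
  show (if (2*(k:ℕ)) % 2 = 0 then 2*(k:ℕ)+1 else 2*(k:ℕ)-1) = 2*(k:ℕ)+1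
  split_ifs with h0 <;> omega

lemma flip_po (k : Fin f) : flipFn f (po k) = pe k := by
  apply Fin.ext
  rw [flip_val]
  show (if (2*(k:ℕ)+1) % 2 = 0 then 2*(k:ℕ)+1+1 else 2*(k:ℕ)+1-1) = 2*(k:ℕ)
  split_ifs with h0 <;> omega

lemma d1_row (k : Fin f) : (w * tauP w) (pe k) < (w * tauP w) (po k) := by
  simp only [Equiv.Perm.mul_apply, tauP_apply]
  unfold tauFn
  have hpe : ((pe k : ℕ)) % 2 = 0 := by show (2*(k:ℕ)) % 2 = 0; omega
  have hpo : ¬ (((po k : ℕ)) % 2 = 0) := by show ¬ ((2*(k:ℕ)+1) % 2 = 0); omega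
  have hwne : w (pe k) ≠ w (po k) := by
    intro h
    have h2 := w.injective h
    have h3 : ((pe k : ℕ)) = ((po k : ℕ)) := congrArg _ h2
    have h4 : (2*(k:ℕ) : ℕ) = 2*(k:ℕ)+1 := h3
    omega
  rw [flip_pe, flip_po]
  by_cases h : w (pe k) < w (po k)
  · rw [if_pos (iff_of_true h hpe),
      if_pos (iff_of_false (fun hh => (lt_asymm h) hh) hpo)]
    exact h
  · have hgt : w (po k) < w (pe k) := lt_of_le_of_ne (not_lt.mp h) (fun he => hwne he.symm)
    rw [if_neg (fun hiff => h (hiff.mpr hpe)),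
      if_neg (fun hiff => hpo (hiff.mp hgt))]
    exact hgt


/-- the equivalence `Fin (2f) ≃ Fin f × Fin 2`, `a ↦ (a/2, a%2)`. -/
def pairEquiv (f : ℕ) : Fin (2*f) ≃ Fin f × Fin 2 where
  toFun a := (⟨(a:ℕ)/2, by have := a.isLt; omega⟩, ⟨(a:ℕ)%2, by omega⟩)
  invFun p := ⟨2*(p.1:ℕ) + (p.2:ℕ), by have := p.1.isLt; have := p.2.isLt; omega⟩
  left_inv a := by
    apply Fin.ext
    show 2*((a:ℕ)/2) + (a:ℕ)%2 = (a:ℕ)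
    omega
  right_inv p := by
    obtain ⟨⟨k, hk⟩, ⟨r, hr⟩⟩ := p
    apply Prod.ext
    · apply Fin.ext; show (2*k + r)/2 = k; omega
    · apply Fin.ext; show (2*k + r)%2 = r; omega

lemma pairEquiv_pe (k : Fin f) : pairEquiv f (pe k) = (k, 0) := by
  apply Prod.ext
  · apply Fin.ext; show (2*(k:ℕ))/2 = (k:ℕ); omega
  · apply Fin.ext; show (2*(k:ℕ))%2 = ((0 : Fin 2):ℕ); omega

lemma pairEquiv_po (k : Fin f) : pairEquiv f (po k) = (k, 1) := by
  apply Prod.ext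
  · apply Fin.ext; show (2*(k:ℕ)+1)/2 = (k:ℕ); omega
  · apply Fin.ext; show (2*(k:ℕ)+1)%2 = ((1 : Fin 2):ℕ); omega

lemma pairEquiv_symm_pe (k : Fin f) : (pairEquiv f).symm (k, 0) = pe k := by
  rw [← pairEquiv_pe k, Equiv.symm_apply_apply]

lemma pairEquiv_symm_po (k : Fin f) : (pairEquiv f).symm (k, 1) = po k := by
  rw [← pairEquiv_po k, Equiv.symm_apply_apply]

/-- the block permutation of `Fin (2f)` induced by `σ : Perm (Fin f)`. -/
def zetaP (σ : Equiv.Perm (Fin f)) : Equiv.Perm (Fin (2*f)) :=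
  (pairEquiv f).trans ((σ.prodCongr (Equiv.refl (Fin 2))).trans (pairEquiv f).symm)

lemma zeta_pe (σ : Equiv.Perm (Fin f)) (k : Fin f) : zetaP σ (pe k) = pe (σ k) := by
  unfold zetaP
  simp only [Equiv.trans_apply, pairEquiv_pe, Equiv.prodCongr_apply, Prod.map,
    Equiv.refl_apply]
  exact pairEquiv_symm_pe (σ k)

lemma zeta_po (σ : Equiv.Perm (Fin f)) (k : Fin f) : zetaP σ (po k) = po (σ k) := by
  unfold zetaP
  simp only [Equiv.trans_apply, pairEquiv_po, Equiv.prodCongr_apply, Prod.map,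
    Equiv.refl_apply]
  exact pairEquiv_symm_po (σ k)

lemma a_eq_pe {a : Fin (2*f)} {k : Fin f} (h : (a:ℕ)/2 = (k:ℕ))
    (hp : (a:ℕ)%2 = 0) : a = pe k := by
  apply Fin.ext; show (a:ℕ) = 2*(k:ℕ); omega

lemma a_eq_po {a : Fin (2*f)} {k : Fin f} (h : (a:ℕ)/2 = (k:ℕ))
    (hp : (a:ℕ)%2 = 1) : a = po k := by
  apply Fin.ext; show (a:ℕ) = 2*(k:ℕ)+1; omega

lemma pe_div (k : Fin f) : ((pe k : ℕ))/2 = (k:ℕ) := by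
  show (2*(k:ℕ))/2 = (k:ℕ); omega

lemma po_div (k : Fin f) : ((po k : ℕ))/2 = (k:ℕ) := by
  show (2*(k:ℕ)+1)/2 = (k:ℕ); omega

lemma zeta_div (σ : Equiv.Perm (Fin f)) (a : Fin (2*f)) (k : Fin f)
    (h : (a:ℕ)/2 = (k:ℕ)) : ((zetaP σ a : ℕ))/2 = ((σ k : ℕ)) := by
  rcases Nat.mod_two_eq_zero_or_one (a:ℕ) with hp | hp
  · rw [a_eq_pe h hp, zeta_pe, pe_div]
  · rw [a_eq_po h hp, zeta_po, po_div]

lemma pp_zeta (σ : Equiv.Perm (Fin f)) : PP f (zetaP σ) := by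
  intro a b hab
  have hlt : (a:ℕ)/2 < f := by have := a.isLt; omega
  set k : Fin f := ⟨(a:ℕ)/2, hlt⟩
  rw [zeta_div σ a k rfl, zeta_div σ b k (by exact hab.symm)]

end Exist

end Stmt13

/-- `S_{2f}` is the disjoint union of the cosets `Ψ·d`, `d ∈ D_f`:
every `w ∈ S_{2f}` lies in `Ψ·d` for exactly one `d ∈ D_f`.  (Products of permutations
are written with the leftmost factor acting first, so `ψ·d` is `d * ψ` in Lean's
convention.) -/
theorem S2f_coset_decomposition (f : ℕ) (hf : 1 ≤ f) :
    ∀ w : Equiv.Perm (Fin (2*f)),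
      ∃! d : Equiv.Perm (Fin (2*f)),
        DfP (2*f) f d ∧ ∃ ψ, PsiP (2*f) f ψ ∧ w = d * ψ := by
  intro w
  classical
  set g1 : Fin f → Fin (2*f) := fun k => (w * tauP w) (pe k) with hg1
  have hg1inj : Function.Injective g1 := by
    intro k l h
    have h2 := (w * tauP w).injective h
    have h3 : (2*(k:ℕ) : ℕ) = 2*(l:ℕ) := congrArg Fin.val h2
    exact Fin.ext (by omega)
  set σ := Tuple.sort g1 with hσ
  have hsm : StrictMono (g1 ∘ σ) :=
    (Tuple.monotone_sort g1).strictMono_of_injective (hg1inj.comp σ.injective)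
  set d : Equiv.Perm (Fin (2*f)) := w * tauP w * zetaP σ with hddef
  have hd_pe : ∀ k : Fin f, d (pe k) = g1 (σ k) := by
    intro k
    rw [hddef]
    rw [Equiv.Perm.mul_apply, zeta_pe]
  have hd_po : ∀ k : Fin f, d (po k) = (w * tauP w) (po (σ k)) := by
    intro k
    rw [hddef, Equiv.Perm.mul_apply, zeta_po]
  have hdfp : DfP (2*f) f d := by
    refine ⟨⟨?_, ?_, ?_⟩, fixHigh_always d⟩
    · intro a b ha hb hb2
      have hlt : (a:ℕ)/2 < f := by have := a.isLt; omega
      set k : Fin f := ⟨(a:ℕ)/2, hlt⟩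
      have hae : a = pe k := a_eq_pe rfl ha
      have hbe : b = po k := a_eq_po (by show (b:ℕ)/2 = (a:ℕ)/2; omega) (by omega)
      rw [hae, hbe, hd_pe, hd_po]
      exact d1_row w (σ k)
    · intro a b ha hb hab hb2
      have hlta : (a:ℕ)/2 < f := by have := a.isLt; omega
      have hltb : (b:ℕ)/2 < f := by have := b.isLt; omega
      set k : Fin f := ⟨(a:ℕ)/2, hlta⟩
      set l : Fin f := ⟨(b:ℕ)/2, hltb⟩
      have hae : a = pe k := a_eq_pe rfl ha
      have hbe : b = pe l := a_eq_pe rfl hb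
      have hkl : k < l := by
        show (a:ℕ)/2 < (b:ℕ)/2
        omega
      rw [hae, hbe, hd_pe, hd_pe]
      exact hsm hkl
    · intro a b ha hb
      exact absurd a.isLt (by omega)
  have hppd : PP f ((zetaP σ)⁻¹ * (tauP w)⁻¹) :=
    pp_mul (pp_inv (pp_zeta σ)) (pp_inv (pp_tau w))
  refine ⟨d, ⟨hdfp, (zetaP σ)⁻¹ * (tauP w)⁻¹, (psiP_iff _).mpr hppd, ?_⟩, ?_⟩
  · rw [hddef]; group
  · rintro d' ⟨hd', ψ', hψ', hw'⟩
    have key : d' * ψ' = d * ((zetaP σ)⁻¹ * (tauP w)⁻¹) := by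
      rw [← hw', hddef]; group
    have h2 : d⁻¹ * d' = ((zetaP σ)⁻¹ * (tauP w)⁻¹) * ψ'⁻¹ := by
      calc d⁻¹ * d' = d⁻¹ * (d' * ψ') * ψ'⁻¹ := by group
        _ = d⁻¹ * (d * ((zetaP σ)⁻¹ * (tauP w)⁻¹)) * ψ'⁻¹ := by rw [key]
        _ = ((zetaP σ)⁻¹ * (tauP w)⁻¹) * ψ'⁻¹ := by group
    have hpp : PP f (d⁻¹ * d') := by
      rw [h2]
      exact pp_mul hppd (pp_inv ((psiP_iff _).mp hψ'))
    exact df_unique hd' hdfp hpp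

end SpBrauer
end
end

section
/- Let K be a field, m ≥ n, 1 ≤ f ≤ ⌊n/2⌋, k ∈ I_f, and v := v_c ⊗ v_k ∈ V^{⊗n} where c := (1,1',2,2',…,f,f'). Let 1 ≠ d ∈ S_n. If either d ∉ S_{(2f,n−2f)} or d ∈ D_f, then d^{−1} z E_f ∈ ann(v) for every z ∈ Ψ, i.e. v·(d^{−1} z E_f) = 0. -/
open scoped BigOperators Classical
open MulOpposite

noncomputable section

namespace SpBrauer

/-! ### auxiliary lemmas -/

lemma funMap_apply' {R : Type} [CommRing R] {α β : Type} [Fintype α]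
    (M : β → α → R) (x : α → R) (b : β) :
    funMap R α β M x b = ∑ a, M b a * x a := rfl

lemma permOp_dta (R : Type) [CommRing R] (m n : ℕ) (π : Equiv.Perm (Fin n))
    (i : Fin n → Fin (2*m)) :
    permOp R m n π (dta R m n i)
      = (((Equiv.Perm.sign π : ℤ) : R)) • dta R m n (i ∘ ⇑π⁻¹) := by
  funext b
  rw [permOp, funMap_apply']
  rw [Finset.sum_eq_single i]
  · simp only [dta, if_pos rfl, mul_one, Pi.smul_apply, smul_eq_mul, mul_ite, mul_zero]
    have hiff : (i = b ∘ ⇑π) ↔ (b = i ∘ ⇑π⁻¹) := by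
      constructor
      · intro h; funext p
        have := congrFun h (π⁻¹ p)
        simp only [Function.comp_apply, Equiv.Perm.coe_inv, Equiv.apply_symm_apply] at this ⊢
        exact this.symm
      · intro h; funext p
        have := congrFun h (π p)
        simp only [Function.comp_apply, Equiv.Perm.coe_inv, Equiv.symm_apply_apply] at this ⊢
        exact this.symm
    rw [if_congr hiff rfl rfl]
    split_ifs <;> simp
  · intro a _ ha
    simp [dta, ha]
  · intro h
    exact absurd (Finset.mem_univ i) h

lemma eOp_apply' (R : Type) [CommRing R] (m n : ℕ) (j : Fin (n-1)) (x : Ten R m n)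
    (b : Fin n → Fin (2*m)) :
    eOp R m n j x b = ∑ a,
      ((if ∀ p : Fin n, p ≠ (⟨(j:ℕ), by have := j.isLt; omega⟩ : Fin n) →
          p ≠ (⟨(j:ℕ)+1, by have := j.isLt; omega⟩ : Fin n) → a p = b p then (1:R) else 0) *
        (-((epsZ m (b ⟨(j:ℕ), by have := j.isLt; omega⟩) (b ⟨(j:ℕ)+1, by have := j.isLt; omega⟩) : ℤ) : R)) *
        ((epsZ m (a ⟨(j:ℕ), by have := j.isLt; omega⟩) (a ⟨(j:ℕ)+1, by have := j.isLt; omega⟩) : ℤ) : R)) * x a := rfl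

lemma eOp_kill (R : Type) [CommRing R] (m n : ℕ) (j : Fin (n-1)) (x : Ten R m n)
    (hx : ∀ a : Fin n → Fin (2*m), x a ≠ 0 →
      epsZ m (a ⟨(j:ℕ), by have := j.isLt; omega⟩) (a ⟨(j:ℕ)+1, by have := j.isLt; omega⟩) = 0) :
    eOp R m n j x = 0 := by
  funext b
  rw [eOp_apply']
  rw [show (0:Ten R m n) b = 0 from rfl]
  apply Finset.sum_eq_zero
  intro a _
  by_cases h : x a = 0
  · rw [h, mul_zero]
  · rw [hx a h]
    simp

lemma eOp_preserve (R : Type) [CommRing R] (m n : ℕ) (j s : Fin (n-1))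
    (hjs : (j:ℕ)+1 < (s:ℕ) ∨ (s:ℕ)+1 < (j:ℕ)) (x : Ten R m n)
    (hx : ∀ a : Fin n → Fin (2*m), x a ≠ 0 →
      epsZ m (a ⟨(j:ℕ), by have := j.isLt; omega⟩) (a ⟨(j:ℕ)+1, by have := j.isLt; omega⟩) = 0) :
    ∀ b : Fin n → Fin (2*m), eOp R m n s x b ≠ 0 →
      epsZ m (b ⟨(j:ℕ), by have := j.isLt; omega⟩) (b ⟨(j:ℕ)+1, by have := j.isLt; omega⟩) = 0 := by
  intro b hb
  by_contra hne
  apply hb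
  rw [eOp_apply']
  apply Finset.sum_eq_zero
  intro a _
  by_cases hag : ∀ p : Fin n, p ≠ (⟨(s:ℕ), by have := s.isLt; omega⟩ : Fin n) →
      p ≠ (⟨(s:ℕ)+1, by have := s.isLt; omega⟩ : Fin n) → a p = b p
  · have h1 : a ⟨(j:ℕ), by have := j.isLt; omega⟩ = b ⟨(j:ℕ), by have := j.isLt; omega⟩ := by
      apply hag <;> · intro hc
                      have := congrArg Fin.val hc
                      simp at this
                      omega
    have h2 : a ⟨(j:ℕ)+1, by have := j.isLt; omega⟩ = b ⟨(j:ℕ)+1, by have := j.isLt; omega⟩ := by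
      apply hag <;> · intro hc
                      have := congrArg Fin.val hc
                      simp at this
                      omega
    have hxa : x a = 0 := by
      by_contra hxa
      exact hne (by rw [← h1, ← h2]; exact hx a hxa)
    rw [hxa, mul_zero]
  · rw [if_neg hag]
    simp

lemma prodE_preserve (R : Type) [CommRing R] (m n : ℕ) (j : Fin (n-1))
    (L : List (Fin (n-1))) (hL : ∀ s ∈ L, (j:ℕ)+1 < (s:ℕ) ∨ (s:ℕ)+1 < (j:ℕ))
    (x : Ten R m n)
    (hx : ∀ a : Fin n → Fin (2*m), x a ≠ 0 →
      epsZ m (a ⟨(j:ℕ), by have := j.isLt; omega⟩) (a ⟨(j:ℕ)+1, by have := j.isLt; omega⟩) = 0) :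
    ∀ a : Fin n → Fin (2*m), ((L.map (eOp R m n)).prod x) a ≠ 0 →
      epsZ m (a ⟨(j:ℕ), by have := j.isLt; omega⟩) (a ⟨(j:ℕ)+1, by have := j.isLt; omega⟩) = 0 := by
  induction L with
  | nil => simpa using hx
  | cons s t ih =>
      have hrec := ih (fun u hu => hL u (List.mem_cons_of_mem s hu))
      rw [List.map_cons, List.prod_cons]
      rw [Module.End.mul_apply]
      exact eOp_preserve R m n j s (hL s (List.mem_cons_self (a := s) (l := t))) _ hrec

lemma prodE_kill (R : Type) [CommRing R] (m n : ℕ) (j : Fin (n-1))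
    (L : List (Fin (n-1))) (hj : j ∈ L)
    (hsep : ∀ s ∈ L, s = j ∨ (j:ℕ)+1 < (s:ℕ) ∨ (s:ℕ)+1 < (j:ℕ))
    (x : Ten R m n)
    (hx : ∀ a : Fin n → Fin (2*m), x a ≠ 0 →
      epsZ m (a ⟨(j:ℕ), by have := j.isLt; omega⟩) (a ⟨(j:ℕ)+1, by have := j.isLt; omega⟩) = 0) :
    (L.map (eOp R m n)).prod x = 0 := by
  induction L with
  | nil => exact absurd hj List.not_mem_nil
  | cons s t ih =>
      rw [List.map_cons, List.prod_cons, Module.End.mul_apply]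
      by_cases hjt : j ∈ t
      · rw [ih hjt (fun u hu => hsep u (List.mem_cons_of_mem s hu))]
        exact map_zero _
      · have hsj : s = j := by
          rcases List.mem_cons.mp hj with h | h
          · exact h.symm
          · exact absurd h hjt
        subst hsj
        apply eOp_kill
        apply prodE_preserve
        · intro u hu
          rcases hsep u (List.mem_cons_of_mem s hu) with h | h
          · exact absurd (h ▸ hu) hjt
          · exact h
        · exact hx

lemma cIdx_cases (m n f : ℕ) (hfm : f ≤ m) (kk : Fin n → Fin (2*m)) (hkk : IfP m n f kk)
    (p : Fin n) :
    ((p:ℕ) < 2*f ∧ ((p:ℕ) % 2 = 0 → (cIdx m n f hfm kk p : ℕ) = (p:ℕ)/2) ∧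
      ((p:ℕ) % 2 = 1 → (cIdx m n f hfm kk p : ℕ) = 2*m - 1 - (p:ℕ)/2)) ∨
    (2*f ≤ (p:ℕ) ∧ 2*f ≤ (cIdx m n f hfm kk p : ℕ) ∧ (cIdx m n f hfm kk p : ℕ) < m) := by
  by_cases hp : (p:ℕ) < 2*f
  · left
    refine ⟨hp, fun hpar => ?_, fun hpar => ?_⟩
    · simp [cIdx, hp, hpar]
    · have : ¬ ((p:ℕ) % 2 = 0) := by omega
      simp [cIdx, hp, this, conjIdx]
  · right
    have hp' : 2*f ≤ (p:ℕ) := by omega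
    have := hkk p hp'
    refine ⟨hp', ?_, ?_⟩ <;> simp [cIdx, hp] <;> omega

lemma eps0 (m n f : ℕ) (hmn : n ≤ m) (hf1 : 1 ≤ f) (hfn : 2*f ≤ n) (hfm : f ≤ m)
    (kk : Fin n → Fin (2*m)) (hkk : IfP m n f kk) (a b : Fin n)
    (h : epsZ m (cIdx m n f hfm kk a) (cIdx m n f hfm kk b) ≠ 0) :
    (a:ℕ)/2 = (b:ℕ)/2 ∧ (a:ℕ) ≠ (b:ℕ) ∧ (a:ℕ) < 2*f ∧ (b:ℕ) < 2*f := by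
  have hsum : (cIdx m n f hfm kk a : ℕ) + (cIdx m n f hfm kk b : ℕ) + 1 = 2*m := by
    by_contra hc
    exact h (by simp [epsZ, hc])
  have hfm' : f ≤ m := hfm
  have ha := cIdx_cases m n f hfm kk hkk a
  have hb := cIdx_cases m n f hfm kk hkk b
  have ha2 : (a:ℕ) % 2 = 0 ∨ (a:ℕ) % 2 = 1 := by omega
  have hb2 : (b:ℕ) % 2 = 0 ∨ (b:ℕ) % 2 = 1 := by omega
  rcases ha with ⟨hal, hae, hao⟩ | ⟨hah, hav1, hav2⟩ <;>
    rcases hb with ⟨hbl, hbe, hbo⟩ | ⟨hbh, hbv1, hbv2⟩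
  · rcases ha2 with h2a | h2a <;> rcases hb2 with h2b | h2b
    · have := hae h2a; have := hbe h2b; omega
    · have := hae h2a; have := hbo h2b; omega
    · have := hao h2a; have := hbe h2b; omega
    · have := hao h2a; have := hbo h2b; omega
  · rcases ha2 with h2a | h2a
    · have := hae h2a; omega
    · have := hao h2a; omega
  · rcases hb2 with h2b | h2b
    · have := hbe h2b; omega
    · have := hbo h2b; omega
  · omega

lemma z_pairs (n f : ℕ) (hfn : 2*f ≤ n) (z : Equiv.Perm (Fin n)) (hz : PsiP n f z)
    (s : ℕ) (hs : s < f) :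
    ((z ⟨2*s, by omega⟩ : Fin n) : ℕ)/2 = ((z ⟨2*s+1, by omega⟩ : Fin n) : ℕ)/2 ∧
    ((z ⟨2*s, by omega⟩ : Fin n) : ℕ) ≠ ((z ⟨2*s+1, by omega⟩ : Fin n) : ℕ) ∧
    ((z ⟨2*s, by omega⟩ : Fin n) : ℕ) < 2*f ∧ ((z ⟨2*s+1, by omega⟩ : Fin n) : ℕ) < 2*f := by
  set p : Fin n := ⟨2*s, by omega⟩ with hp
  set q : Fin n := ⟨2*s+1, by omega⟩ with hq
  have hpq : p ≠ q := by
    intro hc; have := congrArg Fin.val hc; simp [hp, hq] at this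
  have hrs : RowStabP n f (Equiv.swap p q) := by
    constructor
    · intro a ha
      apply Equiv.swap_apply_of_ne_of_ne <;>
        · intro hc; rw [hc] at ha; simp [hp, hq] at ha; omega
    · intro a
      by_cases hap : a = p
      · rw [hap, Equiv.swap_apply_left]; simp [hp, hq]; omega
      · by_cases haq : a = q
        · rw [haq, Equiv.swap_apply_right]; simp [hp, hq]; omega
        · rw [Equiv.swap_apply_of_ne_of_ne hap haq]
  have hconj := (hz.2 (Equiv.swap p q)).mp hrs
  have hkey : ((z q : Fin n) : ℕ)/2 = ((z p : Fin n) : ℕ)/2 := by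
    have := hconj.2 (z p)
    have heval : (z * Equiv.swap p q * z⁻¹) (z p) = z q := by
      simp [Equiv.Perm.mul_apply, Equiv.Perm.coe_inv, Equiv.symm_apply_apply, Equiv.swap_apply_left]
    rw [heval] at this
    exact this
  have hzne : z p ≠ z q := fun hc => hpq (z.injective hc)
  have hlow : ∀ r : Fin n, (r:ℕ) < 2*f → ((z r : Fin n) : ℕ) < 2*f := by
    intro r hr
    by_contra hc
    push_neg at hc
    have := hz.1 (z r) hc
    have := z.injective this
    rw [this] at hc
    omega
  refine ⟨hkey.symm, fun hc => hzne (Fin.ext hc), hlow p (by simp [hp]; omega),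
    hlow q (by simp [hq]; omega)⟩

lemma exists_eps_zero (m n f : ℕ) (hmn : n ≤ m) (hf1 : 1 ≤ f) (hfn : 2*f ≤ n)
    (hfm : f ≤ m) (kk : Fin n → Fin (2*m)) (hkk : IfP m n f kk)
    (d : Equiv.Perm (Fin n)) (hd1 : d ≠ 1)
    (hd : ¬ BlockP n f d ∨ DfP n f d)
    (z : Equiv.Perm (Fin n)) (hz : PsiP n f z) :
    ∃ r, r < f ∧ ∀ (h1 : 2*r < n) (h2 : 2*r+1 < n),
      epsZ m (cIdx m n f hfm kk (d (z⁻¹ ⟨2*r, h1⟩)))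
        (cIdx m n f hfm kk (d (z⁻¹ ⟨2*r+1, h2⟩))) = 0 := by
  by_contra hc
  push_neg at hc
  -- assumption: all the relevant epsilons are nonzero
  have hne : ∀ r, r < f → ∀ (h1 : 2*r < n) (h2 : 2*r+1 < n),
      epsZ m (cIdx m n f hfm kk (d (z⁻¹ ⟨2*r, h1⟩)))
        (cIdx m n f hfm kk (d (z⁻¹ ⟨2*r+1, h2⟩))) ≠ 0 := by
    intro r hr h1 h2
    obtain ⟨h1', h2', hx⟩ := hc r hr
    exact hx
  -- Step A : d sends each pair {2t, 2t+1} (t < f) to a pair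
  have pairsD : ∀ t, t < f → ∀ (h1 : 2*t < n) (h2 : 2*t+1 < n),
      ((d ⟨2*t,h1⟩ : Fin n):ℕ)/2 = ((d ⟨2*t+1,h2⟩ : Fin n):ℕ)/2 ∧
      ((d ⟨2*t,h1⟩ : Fin n):ℕ) ≠ ((d ⟨2*t+1,h2⟩ : Fin n):ℕ) ∧
      ((d ⟨2*t,h1⟩ : Fin n):ℕ) < 2*f ∧ ((d ⟨2*t+1,h2⟩ : Fin n):ℕ) < 2*f := by
    intro t ht h1 h2
    obtain ⟨hz1, hz2, hz3, hz4⟩ := z_pairs n f hfn z hz t ht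
    set r : ℕ := ((z ⟨2*t, h1⟩ : Fin n) : ℕ)/2 with hrdef
    have hr : r < f := by omega
    have hr1 : 2*r < n := by omega
    have hr2 : 2*r+1 < n := by omega
    have hcase : (((z ⟨2*t, h1⟩ : Fin n):ℕ) = 2*r ∧ ((z ⟨2*t+1, h2⟩ : Fin n):ℕ) = 2*r+1)
        ∨ (((z ⟨2*t, h1⟩ : Fin n):ℕ) = 2*r+1 ∧ ((z ⟨2*t+1, h2⟩ : Fin n):ℕ) = 2*r) := by
      omega
    have he := hne r hr hr1 hr2
    rcases hcase with ⟨hc1, hc2⟩ | ⟨hc1, hc2⟩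
    · have hzz1 : z ⟨2*t, h1⟩ = (⟨2*r, hr1⟩ : Fin n) := Fin.ext hc1
      have hzz2 : z ⟨2*t+1, h2⟩ = (⟨2*r+1, hr2⟩ : Fin n) := Fin.ext hc2
      have e1 : z⁻¹ (⟨2*r, hr1⟩ : Fin n) = ⟨2*t, h1⟩ := by
        rw [← hzz1]; exact Equiv.symm_apply_apply z _
      have e2 : z⁻¹ (⟨2*r+1, hr2⟩ : Fin n) = ⟨2*t+1, h2⟩ := by
        rw [← hzz2]; exact Equiv.symm_apply_apply z _
      rw [e1, e2] at he
      obtain ⟨q1, q2, q3, q4⟩ := eps0 m n f hmn hf1 hfn hfm kk hkk _ _ he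
      exact ⟨q1, q2, q3, q4⟩
    · have hzz1 : z ⟨2*t, h1⟩ = (⟨2*r+1, hr2⟩ : Fin n) := Fin.ext hc1
      have hzz2 : z ⟨2*t+1, h2⟩ = (⟨2*r, hr1⟩ : Fin n) := Fin.ext hc2
      have e1 : z⁻¹ (⟨2*r+1, hr2⟩ : Fin n) = ⟨2*t, h1⟩ := by
        rw [← hzz1]; exact Equiv.symm_apply_apply z _
      have e2 : z⁻¹ (⟨2*r, hr1⟩ : Fin n) = ⟨2*t+1, h2⟩ := by
        rw [← hzz2]; exact Equiv.symm_apply_apply z _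
      rw [e1, e2] at he
      obtain ⟨q1, q2, q3, q4⟩ := eps0 m n f hmn hf1 hfn hfm kk hkk _ _ he
      exact ⟨q1.symm, fun hq => q2 hq.symm, q4, q3⟩
  -- Step B : d ∈ S_{(2f, n-2f)}
  have hfwd : ∀ a : Fin n, (a:ℕ) < 2*f → ((d a : Fin n):ℕ) < 2*f := by
    intro a ha
    have ht : (a:ℕ)/2 < f := by omega
    have h1 : 2*((a:ℕ)/2) < n := by omega
    have h2 : 2*((a:ℕ)/2)+1 < n := by omega
    obtain ⟨_, _, q3, q4⟩ := pairsD ((a:ℕ)/2) ht h1 h2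
    have hval : (a:ℕ) = 2*((a:ℕ)/2) ∨ (a:ℕ) = 2*((a:ℕ)/2)+1 := by omega
    rcases hval with hv | hv
    · rw [show a = (⟨2*((a:ℕ)/2), h1⟩ : Fin n) from Fin.ext hv]; exact q3
    · rw [show a = (⟨2*((a:ℕ)/2)+1, h2⟩ : Fin n) from Fin.ext hv]; exact q4
  have hblock : BlockP n f d := by
    intro a
    classical
    set A : Finset (Fin n) := Finset.univ.filter (fun a : Fin n => (a:ℕ) < 2*f) with hA
    have himg : A.image d ⊆ A := by
      intro b hb
      rw [Finset.mem_image] at hb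
      obtain ⟨a', ha', rfl⟩ := hb
      rw [hA, Finset.mem_filter] at ha' ⊢
      exact ⟨Finset.mem_univ _, hfwd a' ha'.2⟩
    have hcard : (A.image d).card = A.card := Finset.card_image_of_injective A d.injective
    have heq : A.image d = A := Finset.eq_of_subset_of_card_le himg (le_of_eq hcard.symm)
    constructor
    · intro ha; exact hfwd a ha
    · intro ha
      have hda : d a ∈ A := by rw [hA, Finset.mem_filter]; exact ⟨Finset.mem_univ _, ha⟩
      rw [← heq, Finset.mem_image] at hda
      obtain ⟨b, hb, hba⟩ := hda
      have : b = a := d.injective hba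
      rw [← this]
      rw [hA, Finset.mem_filter] at hb
      exact hb.2
  have hDf : DfP n f d := by
    rcases hd with h | h
    · exact absurd hblock h
    · exact h
  obtain ⟨⟨hnu1, hnu2, _⟩, hfix⟩ := hDf
  -- Step C : d = 1, contradiction
  set T : ℕ → ℕ := fun s => if h : 2*s < n then ((d ⟨2*s, h⟩ : Fin n) : ℕ)/2 else 0 with hTdef
  have hT : ∀ s, s < f → ∀ (h1 : 2*s < n) (h2 : 2*s+1 < n),
      ((d ⟨2*s,h1⟩ : Fin n):ℕ) = 2*T s ∧ ((d ⟨2*s+1,h2⟩ : Fin n):ℕ) = 2*T s + 1 ∧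
      T s < f := by
    intro s hs h1 h2
    have hTs : T s = ((d ⟨2*s, h1⟩ : Fin n) : ℕ)/2 := by
      rw [hTdef]; exact dif_pos h1
    obtain ⟨q1, q2, q3, q4⟩ := pairsD s hs h1 h2
    have hlt : ((d ⟨2*s,h1⟩ : Fin n):ℕ) < ((d ⟨2*s+1,h2⟩ : Fin n):ℕ) := by
      have := hnu1 ⟨2*s,h1⟩ ⟨2*s+1,h2⟩ (by simp only [Fin.val_mk]; omega) (by simp only [Fin.val_mk]) (by simp only [Fin.val_mk]; omega)
      exact this
    omega
  have hTmono : ∀ s s', s < s' → s' < f → T s < T s' := by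
    intro s s' hss hs'
    have h1 : 2*s < n := by omega
    have h1' : 2*s+1 < n := by omega
    have h2 : 2*s' < n := by omega
    have h2' : 2*s'+1 < n := by omega
    have hlt : ((d ⟨2*s,h1⟩ : Fin n):ℕ) < ((d ⟨2*s',h2⟩ : Fin n):ℕ) := by
      have := hnu2 ⟨2*s,h1⟩ ⟨2*s',h2⟩ (by simp only [Fin.val_mk]; omega) (by simp only [Fin.val_mk]; omega) (by simp only [Fin.val_mk]; omega)
        (by simp only [Fin.val_mk]; omega)
      exact this
    have e1 := hT s (by omega) h1 h1'
    have e2 := hT s' hs' h2 h2'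
    omega
  have hTle : ∀ s, s < f → s ≤ T s := by
    intro s
    induction s with
    | zero => omega
    | succ s ih =>
        intro h
        have h1 := hTmono s (s+1) (by omega) h
        have h2 := ih (by omega)
        omega
  have hTge' : ∀ k s, s + k + 1 = f → T s ≤ s := by
    intro k
    induction k with
    | zero =>
        intro s hs
        have := hT s (by omega) (by omega) (by omega)
        omega
    | succ k ih =>
        intro s hs
        have h1 := ih (s+1) (by omega)
        have h2 := hTmono s (s+1) (by omega) (by omega)
        omega
  have hTeq : ∀ s, s < f → T s = s := by
    intro s hs
    have := hTle s hs
    have := hTge' (f - s - 1) s (by omega)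
    omega
  apply hd1
  apply Equiv.ext
  intro a
  rw [Equiv.Perm.one_apply]
  by_cases ha : 2*f ≤ (a:ℕ)
  · exact hfix a ha
  · push_neg at ha
    set s : ℕ := (a:ℕ)/2 with hsdef
    have hs : s < f := by omega
    have h1 : 2*s < n := by omega
    have h2 : 2*s+1 < n := by omega
    obtain ⟨e1, e2, _⟩ := hT s hs h1 h2
    have hTs := hTeq s hs
    have hval : (a:ℕ) = 2*s ∨ (a:ℕ) = 2*s+1 := by omega
    rcases hval with hv | hv
    · rw [show a = (⟨2*s, h1⟩ : Fin n) from Fin.ext hv]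
      exact Fin.ext (by rw [e1, hTs])
    · rw [show a = (⟨2*s+1, h2⟩ : Fin n) from Fin.ext hv]
      exact Fin.ext (by rw [e2, hTs])

/-- Let `m ≥ n`, `1 ≤ f ≤ ⌊n/2⌋`, `k ∈ I_f` and
`v = v_c ⊗ v_k ∈ V^{⊗n}`.  If `1 ≠ d ∈ S_n` with either `d ∉ S_{(2f, n-2f)}` or
`d ∈ D_f`, then `v · (d^{-1} z E_f) = 0` for every `z ∈ Ψ`. -/
theorem annihilation_lemma
    (K : Type) [Field K] (m n f : ℕ) (hmn : n ≤ m) (hf1 : 1 ≤ f) (hfn : 2*f ≤ n)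
    (kk : Fin n → Fin (2*m)) (hkk : IfP m n f kk)
    (d : Equiv.Perm (Fin n)) (hd1 : d ≠ 1)
    (hd : ¬ BlockP n f d ∨ DfP n f d)
    (z : Equiv.Perm (Fin n)) (hz : PsiP n f z) :
    (EfOp K m n f hfn) ((permOp K m n z) ((permOp K m n d⁻¹)
      (dta K m n (cIdx m n f (by omega) kk)))) = 0 := by
  have hfm : f ≤ m := by omega
  rw [permOp_dta, map_smul, permOp_dta, map_smul, map_smul, inv_inv]
  have hzero : EfOp K m n f hfn
      (dta K m n ((cIdx m n f (by omega) kk ∘ ⇑d) ∘ ⇑z⁻¹)) = 0 := by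
    obtain ⟨r, hr, hre⟩ := exists_eps_zero m n f hmn hf1 hfn (by omega) kk hkk d hd1 hd z hz
    have hj0 : 2*r < n - 1 := by omega
    set j0 : Fin (n-1) := ⟨2*r, hj0⟩ with hj0def
    have hEf : EfOp K m n f hfn =
        ((List.ofFn (fun i : Fin f =>
          (⟨2*(i:ℕ), by have := i.isLt; omega⟩ : Fin (n-1)))).map (eOp K m n)).prod := by
      rw [List.map_ofFn]; rfl
    rw [hEf]
    apply prodE_kill K m n j0
    · rw [List.mem_ofFn]
      exact ⟨⟨r, hr⟩, rfl⟩
    · intro s hs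
      rw [List.mem_ofFn] at hs
      obtain ⟨i, hi⟩ := hs
      have hval : (s:ℕ) = 2*(i:ℕ) := by rw [← hi]
      by_cases hsr : (i:ℕ) = r
      · left; exact Fin.ext (by rw [hval, hsr])
      · right
        have : (s:ℕ) ≠ 2*r := by omega
        have hji : (j0:ℕ) = 2*r := rfl
        omega
    · intro a ha
      by_cases h : a = (cIdx m n f (by omega : f ≤ m) kk ∘ ⇑d) ∘ ⇑z⁻¹
      · subst h
        exact hre (by omega) (by omega)
      · exact absurd (if_neg h) ha
  rw [hzero, smul_zero, smul_zero]

end SpBrauer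
end
end
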